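/- arXiv:1405.3471 — 2 statements merged into one kernel-verified Lean document; each statement's English description precedes it below -/
import Mathlib

section
/- The set of Diophantine vectors with fixed exponent τ > n and varying constant C > 0, i.e. vectors ω ∈ ℝⁿ such that there exists C > 0 with |⟨ω, i⟩| ≥ C/‖i‖^τ for all nonzero i ∈ ℤⁿ, has full Lebesgue measure in ℝⁿ when τ > n. -/
open MeasureTheory

lemma tsum_pi_prod (n : ℕ) (g : ℤ → ENNReal) :
    ∑' i : Fin n → ℤ, ∏ j, g (i j) = (∑' m : ℤ, g m) ^ n := by
  induction n with
  | zero =>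
    rw [tsum_eq_single (default : Fin 0 → ℤ)
      (fun b hb => absurd (Subsingleton.elim b default) hb)]
    simp
  | succ n ih =>
    rw [← (Fin.consEquiv (fun _ : Fin (n+1) => ℤ)).tsum_eq]
    simp only [Fin.consEquiv_apply]
    rw [ENNReal.tsum_prod']
    have : ∀ (a : ℤ) (b : Fin n → ℤ),
        (∏ j, g ((Fin.cons a b : Fin (n+1) → ℤ) j)) = g a * ∏ j, g (b j) := by
      intro a b
      rw [Fin.prod_univ_succ]
      simp
    simp_rw [this, ENNReal.tsum_mul_left, ih, ENNReal.tsum_mul_right, pow_succ']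

lemma sum_int_lt_top {p : ℝ} (hp : 1 < p) :
    ∑' m : ℤ, ENNReal.ofReal ((1 + |(m : ℝ)|) ^ (-p)) < ⊤ := by
  have hb : ∀ m : ℤ, ENNReal.ofReal ((1 + |(m : ℝ)|) ^ (-p)) ≤
      (if m = 0 then 1 else ENNReal.ofReal (|(m : ℝ)| ^ (-p))) := by
    intro m
    by_cases hm : m = 0
    · simp [hm, Real.one_rpow, ENNReal.ofReal_le_one]
    · simp only [hm, if_false]
      apply ENNReal.ofReal_le_ofReal
      have h1 : (0:ℝ) < |(m:ℝ)| := by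
        simp only [abs_pos, ne_eq, Int.cast_eq_zero]; exact hm
      exact Real.rpow_le_rpow_of_nonpos h1 (by linarith) (by linarith)
  have hsum : Summable fun m : ℤ => |(m : ℝ)| ^ (-p) := Real.summable_abs_int_rpow hp
  calc ∑' m : ℤ, ENNReal.ofReal ((1 + |(m : ℝ)|) ^ (-p))
      ≤ ∑' m : ℤ, (if m = 0 then 1 else ENNReal.ofReal (|(m : ℝ)| ^ (-p))) :=
        ENNReal.tsum_le_tsum hb
    _ ≤ 1 + ∑' m : ℤ, ENNReal.ofReal (|(m : ℝ)| ^ (-p)) := by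
        rw [ENNReal.tsum_eq_add_tsum_ite (0 : ℤ)]
        simp only [eq_self_iff_true, if_true]
        gcongr 1 + ?_
        refine ENNReal.tsum_le_tsum fun m => ?_
        by_cases hm : m = 0 <;> simp [hm]
    _ < ⊤ := by
        rw [← ENNReal.ofReal_tsum_of_nonneg
          (fun m => Real.rpow_nonneg (abs_nonneg _) _) hsum]
        exact ENNReal.add_lt_top.mpr ⟨ENNReal.one_lt_top, ENNReal.ofReal_lt_top⟩


lemma slab_bound {n : ℕ} (i : Fin n → ℤ) (hi : i ≠ 0) (ε R : ℝ) :
    volume {ω : Fin n → ℝ | (∀ j, ω j ∈ Set.Icc (-R) R) ∧ |∑ j, ω j * (i j : ℝ)| ≤ ε} ≤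
      ENNReal.ofReal (‖(fun j => (i j : ℝ))‖⁻¹ * (2 * ε)) * ENNReal.ofReal (2 * R) ^ (n - 1) := by
  -- Fin n is nonempty
  have hn : 0 < n := by
    rcases Nat.eq_zero_or_pos n with h | h
    · subst h; exact absurd (Subsingleton.elim i 0) hi
    · exact h
  haveI : NeZero n := ⟨hn.ne'⟩
  -- the coerced vector and its norm
  set v : Fin n → ℝ := fun j => (i j : ℝ) with hv
  have hv0 : v ≠ 0 := by
    intro h
    apply hi
    funext j
    have := congrFun h j
    simpa [hv] using this
  have hN : 0 < ‖v‖ := norm_pos_iff.mpr hv0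
  -- pick the maximizing coordinate
  obtain ⟨j0, -, hj0⟩ := Finset.exists_mem_eq_sup Finset.univ Finset.univ_nonempty
    (fun j => ‖v j‖₊)
  have hNj0 : ‖v‖ = |v j0| := by
    rw [Pi.norm_def, hj0]
    simp [Real.norm_eq_abs]
  have hj0ne : v j0 ≠ 0 := by
    intro h
    rw [hNj0, h, abs_zero] at hN
    exact lt_irrefl _ hN
  -- the matrix and linear map
  set M : Matrix (Fin n) (Fin n) ℝ := Matrix.updateRow 1 j0 v with hM
  have hdet : M.det = v j0 := by
    have hrow : v = ∑ k, v k • (1 : Matrix (Fin n) (Fin n) ℝ) k := by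
      funext c
      simp [Matrix.one_apply, Finset.sum_apply, Finset.sum_ite_eq', mul_ite, mul_one, mul_zero]
    rw [hM]
    conv_lhs => rw [hrow]
    rw [Matrix.det_updateRow_sum]
    simp
  set A : (Fin n → ℝ) →ₗ[ℝ] (Fin n → ℝ) := Matrix.toLin' M with hA
  have hdetA : LinearMap.det A = v j0 := by rw [hA, LinearMap.det_toLin', hdet]
  have hdetA0 : LinearMap.det A ≠ 0 := hdetA ▸ hj0ne
  -- target box
  set B : Fin n → Set ℝ := fun j => if j = j0 then Set.Icc (-ε) ε else Set.Icc (-R) R with hB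
  -- inclusion
  have hsub : {ω : Fin n → ℝ | (∀ j, ω j ∈ Set.Icc (-R) R) ∧ |∑ j, ω j * (i j : ℝ)| ≤ ε}
      ⊆ A ⁻¹' Set.pi Set.univ B := by
    intro ω hω
    simp only [Set.mem_preimage, Set.mem_pi, Set.mem_univ, forall_true_left]
    intro j
    have hAω : A ω j = M.mulVec ω j := by rw [hA, Matrix.toLin'_apply]
    by_cases hj : j = j0
    · subst hj
      have : M.mulVec ω j = ∑ k, v k * ω k := by
        simp [hM, Matrix.mulVec, dotProduct]
      rw [hB]
      simp only [if_pos rfl]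
      rw [hAω, this]
      have heq : ∑ k, v k * ω k = ∑ k, ω k * (i k : ℝ) := by
        apply Finset.sum_congr rfl
        intro k _
        rw [mul_comm, hv]
      rw [heq]
      exact abs_le.mp hω.2
    · have : M.mulVec ω j = ω j := by
        simp [hM, Matrix.mulVec, Matrix.updateRow_apply, hj, Matrix.one_apply,
          dotProduct, ite_mul, one_mul, zero_mul, Finset.sum_ite_eq]
      rw [hB]
      simp only [hj, if_false]
      rw [hAω, this]
      exact hω.1 j
  calc volume {ω : Fin n → ℝ | (∀ j, ω j ∈ Set.Icc (-R) R) ∧ |∑ j, ω j * (i j : ℝ)| ≤ ε}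
      ≤ volume (A ⁻¹' Set.pi Set.univ B) := measure_mono hsub
    _ = ENNReal.ofReal |(LinearMap.det A)⁻¹| * volume (Set.pi Set.univ B) :=
        Measure.addHaar_preimage_linearMap volume hdetA0 _
    _ ≤ ENNReal.ofReal (‖v‖⁻¹ * (2 * ε)) * ENNReal.ofReal (2 * R) ^ (n - 1) := by
        have hbox : volume (Set.pi Set.univ B) =
            ENNReal.ofReal (2 * ε) * ENNReal.ofReal (2 * R) ^ (n - 1) := by
          rw [volume_pi_pi]
          rw [← Finset.mul_prod_erase Finset.univ _ (Finset.mem_univ j0)]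
          have h1 : volume (B j0) = ENNReal.ofReal (2 * ε) := by
            rw [hB]; simp [Real.volume_Icc]; ring_nf
            rw [ENNReal.ofReal_mul' (by norm_num), ENNReal.ofReal_ofNat]
          have h2 : ∀ j ∈ Finset.univ.erase j0, volume (B j) = ENNReal.ofReal (2 * R) := by
            intro j hj
            rw [hB]
            simp only [Finset.mem_erase] at hj
            simp [hj.1, Real.volume_Icc]
            ring_nf
            rw [ENNReal.ofReal_mul' (by norm_num), ENNReal.ofReal_ofNat]
          rw [h1, Finset.prod_congr rfl h2, Finset.prod_const]
          congr 1
          simp [Finset.card_erase_of_mem]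
        rw [hbox, hdetA, ← mul_assoc]
        gcongr
        rw [← ENNReal.ofReal_mul (by positivity)]
        apply ENNReal.ofReal_le_ofReal
        rw [abs_inv, ← hNj0]


lemma norm_bound {n : ℕ} (hn : 0 < n) (i : Fin n → ℤ) (hi : i ≠ 0) {s : ℝ} (hs : 0 ≤ s) :
    ENNReal.ofReal (‖(fun j => (i j : ℝ))‖ ^ (-s)) ≤
      ENNReal.ofReal (2 ^ s) * ∏ j, ENNReal.ofReal ((1 + |(i j : ℝ)|) ^ (-(s / n))) := by
  set v : Fin n → ℝ := fun j => (i j : ℝ) with hv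
  set N : ℝ := ‖v‖ with hNdef
  -- N ≥ 1
  have hN1 : 1 ≤ N := by
    obtain ⟨j, hj⟩ := Function.ne_iff.mp hi
    have h1 : (1 : ℝ) ≤ |v j| := by
      have : (1 : ℤ) ≤ |i j| := Int.one_le_abs (by simpa using hj)
      calc (1:ℝ) ≤ |(i j : ℤ)| := by exact_mod_cast this
        _ = |v j| := by simp [hv]
    calc (1:ℝ) ≤ |v j| := h1
      _ = ‖v j‖ := (Real.norm_eq_abs _).symm
      _ ≤ ‖v‖ := norm_le_pi_norm v j
  have hN0 : 0 < N := lt_of_lt_of_le one_pos hN1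
  set P : ℝ := ∏ j, (1 + |v j|) with hP
  have hfac_nonneg : ∀ j : Fin n, (0:ℝ) ≤ 1 + |v j| := fun j => by positivity
  have hP0 : 0 < P := Finset.prod_pos fun j _ => by positivity
  -- each factor ≤ 2N
  have hfac : ∀ j : Fin n, 1 + |v j| ≤ 2 * N := by
    intro j
    have h2 : |v j| ≤ N := by
      rw [hNdef, ← Real.norm_eq_abs]; exact norm_le_pi_norm v j
    linarith
  have hPle : P ≤ (2 * N) ^ (n : ℕ) := by
    have h := Finset.prod_le_prod (s := Finset.univ) (f := fun j : Fin n => 1 + |v j|)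
      (g := fun _ : Fin n => 2 * N) (fun j _ => hfac_nonneg j) (fun j _ => hfac j)
    simpa [Finset.prod_const] using h
  have key : P ^ (s / n) ≤ (2 * N) ^ s := by
    calc P ^ (s / n) ≤ ((2 * N) ^ (n : ℕ)) ^ (s / n) :=
          Real.rpow_le_rpow hP0.le hPle (by positivity)
      _ = (2 * N) ^ ((n : ℝ) * (s / n)) := by
          rw [← Real.rpow_natCast (2 * N) n, ← Real.rpow_mul (by positivity)]
      _ = (2 * N) ^ s := by
          congr 1
          field_simp
  -- real inequality
  have hreal : N ^ (-s) ≤ 2 ^ s * P ^ (-(s / n)) := by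
    rw [Real.rpow_neg hN0.le, Real.rpow_neg hP0.le]
    have h1 : ((2 * N) ^ s)⁻¹ ≤ (P ^ (s / n))⁻¹ :=
      inv_anti₀ (Real.rpow_pos_of_pos hP0 _) key
    have h2 : (2 * N) ^ s = 2 ^ s * N ^ s := Real.mul_rpow (by norm_num) hN0.le
    have h3 : (0:ℝ) < 2 ^ s := Real.rpow_pos_of_pos two_pos _
    have h4 : (0:ℝ) < N ^ s := Real.rpow_pos_of_pos hN0 _
    calc (N ^ s)⁻¹ = 2 ^ s * ((2 * N) ^ s)⁻¹ := by
          rw [h2, mul_inv]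
          field_simp
      _ ≤ 2 ^ s * (P ^ (s / n))⁻¹ := by
          exact mul_le_mul_of_nonneg_left h1 h3.le
  calc ENNReal.ofReal (N ^ (-s)) ≤ ENNReal.ofReal (2 ^ s * P ^ (-(s / n))) :=
        ENNReal.ofReal_le_ofReal hreal
    _ = ENNReal.ofReal (2 ^ s) * ENNReal.ofReal (P ^ (-(s / n))) :=
        ENNReal.ofReal_mul (by positivity)
    _ = ENNReal.ofReal (2 ^ s) * ∏ j, ENNReal.ofReal ((1 + |v j|) ^ (-(s / n))) := by
        rw [hP, ← Real.finset_prod_rpow _ _ (fun j _ => hfac_nonneg j),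
          ENNReal.ofReal_prod_of_nonneg (fun j _ => Real.rpow_nonneg (hfac_nonneg j) _)]

/-- The set of vectors that are Diophantine with exponent `τ > n` (for some
constant `C > 0`) has full Lebesgue measure in `ℝⁿ`. -/
theorem stmt_0 (n : ℕ) (τ : ℝ) (hτ : (n : ℝ) < τ) :
    volume {ω : Fin n → ℝ |
      ¬ ∃ C > (0 : ℝ), ∀ i : Fin n → ℤ, i ≠ 0 →
        C / ‖(fun j => (i j : ℝ))‖ ^ τ ≤ |∑ j, ω j * (i j : ℝ)|} = 0 := by
  rcases Nat.eq_zero_or_pos n with hn | hn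
  · subst hn
    have : {ω : Fin 0 → ℝ |
        ¬ ∃ C > (0 : ℝ), ∀ i : Fin 0 → ℤ, i ≠ 0 →
          C / ‖(fun j => (i j : ℝ))‖ ^ τ ≤ |∑ j, ω j * (i j : ℝ)|} = ∅ := by
      ext ω
      simp only [Set.mem_setOf_eq, Set.mem_empty_iff_false, iff_false, not_not]
      exact ⟨1, one_pos, fun i hi => absurd (Subsingleton.elim i 0) hi⟩
    rw [this, measure_empty]
  -- now n ≥ 1
  set Bad := {ω : Fin n → ℝ |
      ¬ ∃ C > (0 : ℝ), ∀ i : Fin n → ℤ, i ≠ 0 →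
        C / ‖(fun j => (i j : ℝ))‖ ^ τ ≤ |∑ j, ω j * (i j : ℝ)|} with hBad
  set s : ℝ := τ + 1 with hsdef
  have hs0 : 0 ≤ s := by
    have : (0:ℝ) ≤ n := Nat.cast_nonneg n
    linarith
  have hp1 : 1 < s / n := by
    rw [lt_div_iff₀ (by exact_mod_cast hn)]
    simp only [hsdef]
    linarith
  -- the total sum is finite
  set T : ENNReal := ∑' i : {i : Fin n → ℤ // i ≠ 0},
      ENNReal.ofReal (‖(fun j => ((i : Fin n → ℤ) j : ℝ))‖ ^ (-s)) with hT
  have hTlt : T < ⊤ := by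
    have hb : ∀ i : {i : Fin n → ℤ // i ≠ 0},
        ENNReal.ofReal (‖(fun j => ((i : Fin n → ℤ) j : ℝ))‖ ^ (-s)) ≤
        ENNReal.ofReal (2 ^ s) *
          ∏ j, ENNReal.ofReal ((1 + |((i : Fin n → ℤ) j : ℝ)|) ^ (-(s / n))) :=
      fun i => norm_bound hn i.1 i.2 hs0
    calc T ≤ ∑' i : {i : Fin n → ℤ // i ≠ 0}, ENNReal.ofReal (2 ^ s) *
          ∏ j, ENNReal.ofReal ((1 + |((i : Fin n → ℤ) j : ℝ)|) ^ (-(s / n))) :=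
          ENNReal.tsum_le_tsum hb
      _ ≤ ∑' i : Fin n → ℤ, ENNReal.ofReal (2 ^ s) *
          ∏ j, ENNReal.ofReal ((1 + |(i j : ℝ)|) ^ (-(s / n))) :=
          ENNReal.tsum_comp_le_tsum_of_injective Subtype.val_injective _
      _ = ENNReal.ofReal (2 ^ s) *
          (∑' m : ℤ, ENNReal.ofReal ((1 + |(m : ℝ)|) ^ (-(s / n)))) ^ n := by
          rw [ENNReal.tsum_mul_left,
            tsum_pi_prod n (fun m => ENNReal.ofReal ((1 + |(m : ℝ)|) ^ (-(s / n))))]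
      _ < ⊤ := ENNReal.mul_lt_top ENNReal.ofReal_lt_top
          (ENNReal.pow_lt_top (sum_int_lt_top hp1))
  -- boxes
  set box : ℕ → Set (Fin n → ℝ) := fun R => {ω | ∀ j, ω j ∈ Set.Icc (-(R:ℝ)) R} with hbox
  have hcover : Bad ⊆ ⋃ R : ℕ, Bad ∩ box R := by
    intro ω hω
    refine Set.mem_iUnion.mpr ⟨⌈‖ω‖⌉₊, hω, fun j => ?_⟩
    have h1 : |ω j| ≤ ‖ω‖ := by rw [← Real.norm_eq_abs]; exact norm_le_pi_norm ω j
    have h2 : ‖ω‖ ≤ (⌈‖ω‖⌉₊ : ℝ) := Nat.le_ceil _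
    exact abs_le.mp (h1.trans h2)
  have hnull : ∀ R : ℕ, volume (Bad ∩ box R) = 0 := by
    intro R
    set K : ENNReal := ENNReal.ofReal (2 * (R:ℝ)) ^ (n - 1) with hK
    set c : ENNReal := K * T with hc
    have hclt : c ≠ ⊤ := ENNReal.mul_ne_top
      (ENNReal.pow_ne_top ENNReal.ofReal_ne_top) hTlt.ne
    have hle : ∀ C : ℝ, 0 < C →
        volume (Bad ∩ box R) ≤ ENNReal.ofReal (2 * C) * c := by
      intro C hC
      have hsub : Bad ∩ box R ⊆ ⋃ i : {i : Fin n → ℤ // i ≠ 0},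
          {ω : Fin n → ℝ | (∀ j, ω j ∈ Set.Icc (-(R:ℝ)) R) ∧
            |∑ j, ω j * ((i : Fin n → ℤ) j : ℝ)| ≤
              C / ‖(fun j => ((i : Fin n → ℤ) j : ℝ))‖ ^ τ} := by
        rintro ω ⟨hω1, hω2⟩
        rw [hBad, Set.mem_setOf_eq] at hω1
        push_neg at hω1
        obtain ⟨i, hi0, hi⟩ := hω1 C hC
        exact Set.mem_iUnion.mpr ⟨⟨i, hi0⟩, hω2, hi.le⟩
      have hterm : ∀ i : {i : Fin n → ℤ // i ≠ 0},
          volume {ω : Fin n → ℝ | (∀ j, ω j ∈ Set.Icc (-(R:ℝ)) R) ∧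
            |∑ j, ω j * ((i : Fin n → ℤ) j : ℝ)| ≤
              C / ‖(fun j => ((i : Fin n → ℤ) j : ℝ))‖ ^ τ} ≤
          ENNReal.ofReal (2 * C) *
            ENNReal.ofReal (‖(fun j => ((i : Fin n → ℤ) j : ℝ))‖ ^ (-s)) * K := by
        intro i
        set N : ℝ := ‖(fun j => ((i : Fin n → ℤ) j : ℝ))‖ with hN
        have hv0 : (fun j => ((i : Fin n → ℤ) j : ℝ)) ≠ 0 := by
          intro h
          apply i.2
          funext j
          have := congrFun h j
          simpa using this
        have hN0 : 0 < N := norm_pos_iff.mpr hv0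
        have heq : N⁻¹ * (2 * (C / N ^ τ)) = 2 * C * N ^ (-s) := by
          rw [hsdef, Real.rpow_neg hN0.le, Real.rpow_add hN0, Real.rpow_one]
          have hτ0 : N ^ τ ≠ 0 := (Real.rpow_pos_of_pos hN0 τ).ne'
          field_simp
        calc volume {ω : Fin n → ℝ | (∀ j, ω j ∈ Set.Icc (-(R:ℝ)) R) ∧
              |∑ j, ω j * ((i : Fin n → ℤ) j : ℝ)| ≤ C / N ^ τ} ≤
            ENNReal.ofReal (N⁻¹ * (2 * (C / N ^ τ))) * ENNReal.ofReal (2 * (R:ℝ)) ^ (n - 1) :=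
              slab_bound i.1 i.2 _ _
          _ = ENNReal.ofReal (2 * C) * ENNReal.ofReal (N ^ (-s)) * K := by
              rw [heq, hK, ENNReal.ofReal_mul (by positivity)]
      calc volume (Bad ∩ box R) ≤ ∑' i : {i : Fin n → ℤ // i ≠ 0},
            volume {ω : Fin n → ℝ | (∀ j, ω j ∈ Set.Icc (-(R:ℝ)) R) ∧
              |∑ j, ω j * ((i : Fin n → ℤ) j : ℝ)| ≤
                C / ‖(fun j => ((i : Fin n → ℤ) j : ℝ))‖ ^ τ} :=
            (measure_mono hsub).trans (measure_iUnion_le _)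
        _ ≤ ∑' i : {i : Fin n → ℤ // i ≠ 0}, ENNReal.ofReal (2 * C) *
              ENNReal.ofReal (‖(fun j => ((i : Fin n → ℤ) j : ℝ))‖ ^ (-s)) * K :=
            ENNReal.tsum_le_tsum hterm
        _ = ENNReal.ofReal (2 * C) * c := by
            rw [hc, hT]
            rw [ENNReal.tsum_mul_right, ENNReal.tsum_mul_left]
            ring
    have htend : Filter.Tendsto (fun m : ℕ => ENNReal.ofReal (2 * (1 / (m + 1))) * c)
        Filter.atTop (nhds 0) := by
      have h1 : Filter.Tendsto (fun m : ℕ => (2 : ℝ) * (1 / (m + 1))) Filter.atTop (nhds 0) := by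
        have := tendsto_one_div_add_atTop_nhds_zero_nat.const_mul (2:ℝ)
        simpa using this
      have h2 : Filter.Tendsto (fun m : ℕ => ENNReal.ofReal (2 * (1 / (m + 1))))
          Filter.atTop (nhds 0) := by
        have := (ENNReal.continuous_ofReal.tendsto 0).comp h1
        rw [ENNReal.ofReal_zero] at this
        exact this
      simpa using ENNReal.Tendsto.mul_const h2 (Or.inr hclt)
    have : volume (Bad ∩ box R) ≤ 0 :=
      ge_of_tendsto' htend (fun m => hle (1 / (m + 1)) (by positivity))
    exact le_antisymm this zero_le
  exact measure_mono_null hcover (measure_iUnion_null fun R => hnull R)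
end

section
/- There exists a non-resonant vector α ∈ ℝ² whose sequence σ(α)ₘ violates the Bruno condition, i.e. Σₘ 2^{−m} log(1/σ(α)ₘ) = ∞: it suffices to take α = (1, λ) for a suitable Liouville number λ whose rational approximations satisfy |λ − pₖ/qₖ| < qₖ^{−qₖ}. -/
/-- `σ(α)ₘ = inf { |⟨α,i⟩| : i ∈ ℤ², 0 < ‖i‖ ≤ 2^m }` (sup norm on `ℤ²`). -/
noncomputable def sigmaSeq (α : Fin 2 → ℝ) (m : ℕ) : ℝ :=
  sInf {x : ℝ | ∃ i : Fin 2 → ℤ, i ≠ 0 ∧ ‖(fun j => (i j : ℝ))‖ ≤ 2 ^ m ∧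
    x = |∑ j, α j * (i j : ℝ)|}


/-- fast-growing exponents -/
def ffexp : ℕ → ℕ
  | 0 => 1
  | n+1 => 4 ^ ffexp n

lemma ffexp_pos (n : ℕ) : 1 ≤ ffexp n := by
  cases n with
  | zero => simp [ffexp]
  | succ n => exact Nat.one_le_pow _ _ (by norm_num)

lemma ffexp_strictMono : StrictMono ffexp := by
  apply strictMono_nat_of_lt_succ
  intro n
  calc ffexp n < 4 ^ ffexp n := Nat.lt_pow_self (by norm_num)
  _ = ffexp (n+1) := rfl

lemma ffexp_ge (n : ℕ) : n + 1 ≤ ffexp n := by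
  induction n with
  | zero => simp [ffexp]
  | succ n ih =>
    have h := ffexp_strictMono (Nat.lt_succ_self n)
    simp only [Nat.succ_eq_add_one] at h
    omega

lemma ffexp_add_le (n j : ℕ) : ffexp n + j ≤ ffexp (j + n) := by
  induction j with
  | zero => simp
  | succ j ih =>
    have h := ffexp_strictMono (Nat.lt_succ_self (j + n))
    simp only [Nat.succ_eq_add_one] at h
    rw [show j + 1 + n = (j + n) + 1 by ring]
    omega

noncomputable def lamL : ℝ := ∑' k, (1/2 : ℝ) ^ (ffexp k)

lemma lamL_summable : Summable (fun k => (1/2 : ℝ) ^ (ffexp k)) := by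
  apply Summable.of_nonneg_of_le (fun k => by positivity)
    (fun k => ?_) (summable_geometric_of_lt_one (by norm_num) (by norm_num) : Summable fun k => (1/2:ℝ)^k)
  exact pow_le_pow_of_le_one (by norm_num) (by norm_num) (by have := ffexp_ge k; omega)
lemma ffexp_succ (n : ℕ) : ffexp (n+1) = 4 ^ ffexp n := rfl

lemma ffexp_one : ffexp 1 = 4 := rfl




noncomputable def SL (n : ℕ) : ℝ := ∑ j ∈ Finset.range n, (1/2 : ℝ) ^ (ffexp j)

lemma remainder_eq (n : ℕ) : lamL - SL n = ∑' j, (1/2 : ℝ) ^ (ffexp (j + n)) := by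
  have h := Summable.sum_add_tsum_nat_add n lamL_summable
  simp only [lamL, SL]
  linarith [h]

lemma remainder_pos (n : ℕ) : 0 < lamL - SL n := by
  rw [remainder_eq]
  have hs : Summable (fun j => (1/2 : ℝ) ^ (ffexp (j + n))) :=
    (lamL_summable.comp_injective (fun a b h => by omega))
  calc (0:ℝ) < (1/2:ℝ) ^ (ffexp (0 + n)) := by positivity
  _ ≤ _ := Summable.le_tsum hs 0 (fun j _ => by positivity)

lemma remainder_le (n : ℕ) : lamL - SL n ≤ 2 * (1/2 : ℝ) ^ (ffexp n) := by
  rw [remainder_eq]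
  have hs : Summable (fun j => (1/2 : ℝ) ^ (ffexp n + j)) := by
    simp_rw [pow_add]
    exact (summable_geometric_of_lt_one (by norm_num) (by norm_num)).mul_left _
  have h1 : ∑' j, (1/2 : ℝ) ^ (ffexp (j + n)) ≤ ∑' j, (1/2 : ℝ) ^ (ffexp n + j) := by
    apply Summable.tsum_le_tsum (fun j => ?_) (lamL_summable.comp_injective (fun a b h => by omega)) hs
    exact pow_le_pow_of_le_one (by norm_num) (by norm_num) (ffexp_add_le n j)
  have h2 : ∑' j, (1/2 : ℝ) ^ (ffexp n + j) = 2 * (1/2 : ℝ) ^ (ffexp n) := by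
    simp_rw [pow_add]
    rw [tsum_mul_left, tsum_geometric_of_lt_one (by norm_num) (by norm_num)]
    ring
  linarith

lemma SL_le_one (n : ℕ) : SL n ≤ 1 := by
  have h1 : SL n ≤ ∑ j ∈ Finset.range n, (1/2 : ℝ) ^ (j+1) :=
    Finset.sum_le_sum fun j _ =>
      pow_le_pow_of_le_one (by norm_num) (by norm_num) (ffexp_ge j)
  have h2 : ∑ j ∈ Finset.range n, (1/2 : ℝ) ^ (j+1) = (1/2) * ∑ j ∈ Finset.range n, (1/2 : ℝ) ^ j := by
    rw [Finset.mul_sum]; exact Finset.sum_congr rfl fun j _ => by ring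
  have h3 := sum_geometric_two_le n
  rw [h2] at h1
  linarith

lemma SL_pos (n : ℕ) : 0 < SL (n+1) := by
  apply Finset.sum_pos (fun j _ => by positivity) ⟨0, by simp⟩

noncomputable def aL (k : ℕ) : ℕ := ∑ j ∈ Finset.range (k+1), 2 ^ (ffexp k - ffexp j)

lemma aL_eq (k : ℕ) : (aL k : ℝ) = 2 ^ (ffexp k) * SL (k+1) := by
  simp only [aL, SL, Nat.cast_sum, Nat.cast_pow, Finset.mul_sum]
  apply Finset.sum_congr rfl
  intro j hj
  have hle : ffexp j ≤ ffexp k :=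
    ffexp_strictMono.monotone (by simpa using Nat.lt_succ_iff.mp (Finset.mem_range.mp hj))
  have : ffexp k - ffexp j + ffexp j = ffexp k := Nat.sub_add_cancel hle
  push_cast
  rw [← this, pow_add]
  rw [Nat.add_sub_cancel, one_div, inv_pow, mul_assoc, mul_inv_cancel₀ (by positivity), mul_one]


-- key nat inequality: for x ≥ n, n*x + 1 < 4^x
lemma key_nat (n x : ℕ) (hx : n ≤ x) (hx1 : 1 ≤ x) : n * x + 1 < 4 ^ x := by
  have h2 : x < 2 ^ x := Nat.lt_two_pow_self
  have h4 : 4 ^ x = 2 ^ x * 2 ^ x := by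
    rw [show (4:ℕ) = 2 * 2 from rfl, Nat.mul_pow]
  nlinarith [h2, hx, hx1]

lemma liouville_lamL : Liouville lamL := by
  intro n
  refine ⟨aL n, 2 ^ (ffexp n), ?_, ?_, ?_⟩
  · have := ffexp_pos n
    calc (1:ℤ) < 2 ^ 1 := by norm_num
    _ ≤ 2 ^ ffexp n := by exact pow_le_pow_right₀ (by norm_num) this
  · push_cast
    have : (aL n : ℝ) / 2 ^ ffexp n = SL (n+1) := by
      rw [aL_eq]; field_simp
    rw [this]
    have := remainder_pos (n+1)
    intro h; rw [h] at this; linarith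
  · push_cast
    have hSeq : (aL n : ℝ) / 2 ^ ffexp n = SL (n+1) := by rw [aL_eq]; field_simp
    rw [hSeq, abs_of_pos (remainder_pos (n+1))]
    have h1 := remainder_le (n+1)
    have hlt : (2:ℝ) * (1/2) ^ ffexp (n+1) < 1 / (2 ^ ffexp n) ^ n := by
      rw [ffexp_succ]
      have hx1 := ffexp_pos n
      have hxn : n ≤ ffexp n := by have := ffexp_ge n; omega
      have hkey := key_nat n (ffexp n) hxn hx1
      obtain ⟨M, hM⟩ : ∃ M, 4 ^ ffexp n = M + 1 := ⟨4 ^ ffexp n - 1, by omega⟩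
      rw [hM] at hkey ⊢
      have e1 : (2:ℝ) * (1/2) ^ (M + 1) = (1/2 : ℝ) ^ M := by
        rw [pow_succ]; ring
      have e2 : (1:ℝ) / (2 ^ ffexp n) ^ n = (1/2 : ℝ) ^ (ffexp n * n) := by
        rw [← pow_mul, one_div, one_div, inv_pow]
      rw [e1, e2]
      apply pow_lt_pow_right_of_lt_one₀ (by norm_num) (by norm_num)
      rw [Nat.mul_comm]
      omega
    calc lamL - SL (n+1) ≤ 2 * (1/2) ^ ffexp (n+1) := h1
    _ < _ := hlt



lemma sigma_bddBelow (α : Fin 2 → ℝ) (m : ℕ) :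
    BddBelow {x : ℝ | ∃ i : Fin 2 → ℤ, i ≠ 0 ∧ ‖(fun j => (i j : ℝ))‖ ≤ 2 ^ m ∧
      x = |∑ j, α j * (i j : ℝ)|} := by
  refine ⟨0, fun x hx => ?_⟩
  obtain ⟨i, -, -, rfl⟩ := hx
  exact abs_nonneg _

lemma sigma_mem (l : ℝ) (m : ℕ) (p q : ℤ) (hne : ¬(p = 0 ∧ q = 0))
    (hp : |(p:ℝ)| ≤ 2 ^ m) (hq : |(q:ℝ)| ≤ 2 ^ m) :
    |(p:ℝ) + l * q| ∈ {x : ℝ | ∃ i : Fin 2 → ℤ, i ≠ 0 ∧ ‖(fun j => (i j : ℝ))‖ ≤ 2 ^ m ∧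
      x = |∑ j, (![1, l]) j * (i j : ℝ)|} := by
  refine ⟨![p, q], ?_, ?_, ?_⟩
  · intro h
    have h0 := congrFun h 0
    have h1 := congrFun h 1
    simp at h0 h1
    exact hne ⟨h0, h1⟩
  · rw [pi_norm_le_iff_of_nonneg (by positivity)]
    intro j
    fin_cases j <;> simpa [Real.norm_eq_abs]
  · rw [Fin.sum_univ_two]
    simp

lemma sigma_le (l : ℝ) (m : ℕ) (p q : ℤ) (hne : ¬(p = 0 ∧ q = 0))
    (hp : |(p:ℝ)| ≤ 2 ^ m) (hq : |(q:ℝ)| ≤ 2 ^ m) :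
    sigmaSeq ![1, l] m ≤ |(p:ℝ) + l * q| :=
  csInf_le (sigma_bddBelow _ _) (sigma_mem l m p q hne hp hq)

lemma sigma_pos (l : ℝ) (hl : ∀ i : Fin 2 → ℤ, i ≠ 0 → ∑ j, (![1, l]) j * (i j : ℝ) ≠ 0)
    (m : ℕ) : 0 < sigmaSeq ![1, l] m := by
  set S := {x : ℝ | ∃ i : Fin 2 → ℤ, i ≠ 0 ∧ ‖(fun j => (i j : ℝ))‖ ≤ 2 ^ m ∧
      x = |∑ j, (![1, l]) j * (i j : ℝ)|} with hS
  have hne : S.Nonempty := ⟨_, sigma_mem l m 1 0 (by simp)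
    (by simp only [Int.cast_one, abs_one]; exact one_le_pow₀ one_le_two)
    (by simp only [Int.cast_zero, abs_zero]; positivity)⟩
  have hfin : S.Finite := by
    have hsub : S ⊆ (fun i : Fin 2 → ℤ => |∑ j, (![1, l]) j * (i j : ℝ)|) ''
        (Set.pi Set.univ fun _ : Fin 2 => (Set.Icc (-(2^m : ℤ)) (2^m))) := by
      rintro x ⟨i, hi0, hin, rfl⟩
      refine ⟨i, fun j _ => ?_, rfl⟩
      have := (norm_le_pi_norm (fun j => (i j : ℝ)) j).trans hin
      rw [Real.norm_eq_abs, abs_le] at this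
      constructor
      · exact_mod_cast this.1
      · exact_mod_cast this.2
    exact Set.Finite.subset (Set.Finite.image _
      (Set.Finite.pi fun _ => Set.finite_Icc _ _)) hsub
  have hmem := hne.csInf_mem hfin
  obtain ⟨i, hi0, -, heq⟩ := hmem
  have hsig : sigmaSeq ![1, l] m = sInf S := rfl
  rw [hsig, heq]
  exact abs_pos.mpr (hl i hi0)

lemma nonres (l : ℝ) (hirr : Irrational l) :
    ∀ i : Fin 2 → ℤ, i ≠ 0 → ∑ j, (![1, l]) j * (i j : ℝ) ≠ 0 := by
  intro i hi0 h
  rw [Fin.sum_univ_two] at h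
  simp only [Matrix.cons_val_zero, Matrix.cons_val_one, Matrix.head_cons, one_mul] at h
  by_cases h1 : i 1 = 0
  · rw [h1] at h
    simp only [Int.cast_zero, mul_zero, add_zero, Int.cast_eq_zero] at h
    apply hi0
    funext j
    fin_cases j
    · exact h
    · exact h1
  · have hl : l = ((-(i 0) : ℚ) / (i 1 : ℚ) : ℚ) := by
      have h1' : ((i 1 : ℝ)) ≠ 0 := Int.cast_ne_zero.mpr h1
      push_cast
      field_simp
      linarith [h]
    exact hirr ⟨_, hl.symm⟩

lemma term_ge (k : ℕ) (hk : 1 ≤ k) :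
    1 ≤ (2:ℝ)⁻¹ ^ (ffexp k) * Real.log (sigmaSeq ![1, lamL] (ffexp k))⁻¹ := by
  have hx4 : 4 ≤ ffexp k := by
    have := ffexp_strictMono.monotone hk; rw [ffexp_one] at this; omega
  set x := ffexp k with hxdef
  have hb : (0:ℝ) < 2 ^ x := by positivity
  have haL_le : (aL k : ℝ) ≤ 2 ^ x := by
    rw [aL_eq]; nlinarith [SL_le_one (k+1)]
  have haL_abs : |((-(aL k : ℤ) : ℤ) : ℝ)| ≤ 2 ^ x := by
    push_cast
    rw [abs_neg, abs_of_nonneg (by positivity)]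
    exact haL_le
  have hq_abs : |(((2:ℤ) ^ x : ℤ) : ℝ)| ≤ 2 ^ x := by
    push_cast
    rw [abs_of_pos hb]
  have hσle := sigma_le lamL x (-(aL k : ℤ)) (2 ^ x)
    (by rintro ⟨-, hq⟩; exact (by positivity : (0:ℤ) < 2 ^ x).ne' hq) haL_abs hq_abs
  have hval : |((-(aL k : ℤ) : ℤ) : ℝ) + lamL * (((2:ℤ) ^ x : ℤ) : ℝ)|
      = 2 ^ x * (lamL - SL (k+1)) := by
    push_cast
    rw [aL_eq]
    rw [abs_of_pos (by nlinarith [remainder_pos (k+1)])]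
    ring
  rw [hval] at hσle
  -- E : the exponent gap
  have hE4 : ffexp (k+1) = 4 ^ x := ffexp_succ k
  have hEgood : 2 ^ (x+1) + x + 1 ≤ 4 ^ x := by
    have h2x : x < 2 ^ x := Nat.lt_two_pow_self
    have h16 : 16 ≤ 2 ^ x := by calc (16:ℕ) = 2 ^ 4 := by norm_num
                                   _ ≤ 2 ^ x := Nat.pow_le_pow_right (by norm_num) hx4
    have h4x : 4 ^ x = 2 ^ x * 2 ^ x := by rw [show (4:ℕ) = 2 * 2 from rfl, Nat.mul_pow]
    rw [h4x, pow_succ]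
    nlinarith
  have hc : x + 1 ≤ ffexp (k+1) := by
    rw [hE4]; exact Nat.lt_pow_self (by norm_num)
  obtain ⟨E, hEeq⟩ : ∃ E, ffexp (k+1) = E + x + 1 := ⟨ffexp (k+1) - x - 1, by omega⟩
  have hEge : 2 ^ (x+1) ≤ E := by
    have h' : 2 ^ (x+1) + x + 1 ≤ ffexp (k+1) := by rw [hE4]; exact hEgood
    omega
  have hlast : 2 ^ x * (lamL - SL (k+1)) ≤ (1/2 : ℝ) ^ E := by
    have h1 := remainder_le (k+1)
    have h2 : (2:ℝ) ^ x * (2 * (1/2) ^ ffexp (k+1)) = (1/2 : ℝ) ^ E := by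
      rw [hEeq, pow_add, pow_add]
      rw [show ((1:ℝ)/2) ^ x = ((2:ℝ) ^ x)⁻¹ by rw [one_div, inv_pow]]
      field_simp
    rw [← h2]
    have := remainder_pos (k+1)
    nlinarith
  have hσpos := sigma_pos lamL (nonres lamL liouville_lamL.irrational) x
  set σ := sigmaSeq ![1, lamL] x with hσdef
  have hσE : σ ≤ (1/2:ℝ)^E := le_trans hσle hlast
  have hinv : ((1/2:ℝ)^E)⁻¹ ≤ σ⁻¹ := by
    apply inv_anti₀ hσpos hσE
  have hloginv : Real.log ((1/2:ℝ)^E)⁻¹ ≤ Real.log σ⁻¹ :=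
    Real.log_le_log (by positivity) hinv
  have hlogE : Real.log ((1/2:ℝ)^E)⁻¹ = E * Real.log 2 := by
    rw [one_div, inv_pow, inv_inv, Real.log_pow]
  rw [hlogE] at hloginv
  have hlog2 : (1/2 : ℝ) ≤ Real.log 2 := by
    have := Real.log_two_gt_d9; linarith
  have hElog : (2:ℝ) ^ x ≤ E * Real.log 2 := by
    have hEr : (2:ℝ) ^ (x+1) ≤ E := by exact_mod_cast Nat.cast_le.mpr hEge |>.trans_eq rfl
    calc (2:ℝ) ^ x = 2 ^ (x+1) * (1/2) := by rw [pow_succ]; ring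
    _ ≤ E * Real.log 2 := by
        apply mul_le_mul hEr hlog2 (by norm_num)
        positivity
  have hfin : (2:ℝ)⁻¹ ^ x * (2 ^ x) = 1 := by
    rw [inv_pow]; field_simp
  calc (1:ℝ) = (2:ℝ)⁻¹ ^ x * 2 ^ x := hfin.symm
  _ ≤ (2:ℝ)⁻¹ ^ x * (E * Real.log 2) := by
      apply mul_le_mul_of_nonneg_left hElog (by positivity)
  _ ≤ (2:ℝ)⁻¹ ^ x * Real.log σ⁻¹ :=
      mul_le_mul_of_nonneg_left hloginv (by positivity)


/-- There is a non-resonant vector `α = (1, λ) ∈ ℝ²`, with `λ` a Liouville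
number, whose sequence `σ(α)` violates the Bruno condition. -/
theorem stmt_13 :
    ∃ l : ℝ, Liouville l ∧
      (∀ i : Fin 2 → ℤ, i ≠ 0 → ∑ j, (![1, l]) j * (i j : ℝ) ≠ 0) ∧
      ¬ Summable (fun m : ℕ => (2 : ℝ)⁻¹ ^ m * Real.log (sigmaSeq ![1, l] m)⁻¹) := by
  refine ⟨lamL, liouville_lamL, nonres lamL liouville_lamL.irrational, ?_⟩
  intro hSum
  have ht := hSum.tendsto_atTop_zero
  have hev : ∀ᶠ m in Filter.atTop,
      (2:ℝ)⁻¹ ^ m * Real.log (sigmaSeq ![1, lamL] m)⁻¹ < 1 :=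
    ht.eventually_lt_const one_pos
  obtain ⟨M, hM⟩ := Filter.eventually_atTop.mp hev
  have h1 := term_ge (M+1) (by omega)
  have hfm : M ≤ ffexp (M+1) := by have := ffexp_ge (M+1); omega
  linarith [hM (ffexp (M+1)) hfm]
end
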